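/- arXiv:2402.08981 — 2 statements merged into one kernel-verified Lean document; each statement's English description precedes it below -/
import Mathlib

section
/- The set of Choi operators of entanglement-breaking channels from H_E to H_B equals { (dim H_E)·σ : σ ∈ SEP(H_E, H_B) and tr_B σ = I_E / dim H_E }, and this set is convex and compact. -/
open Matrix
open scoped Kronecker ComplexOrder

noncomputable section

variable {n : Type*} [Fintype n] [DecidableEq n]

/-- Square root of a positive semidefinite matrix (0 if not PSD). -/
def msqrt (M : Matrix n n ℂ) : Matrix n n ℂ := by
  classical exact if h : M.PosSemidef then
    (h.1.eigenvectorUnitary : Matrix n n ℂ) *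
      diagonal ((↑) ∘ Real.sqrt ∘ h.1.eigenvalues) *
      (star h.1.eigenvectorUnitary : Matrix n n ℂ) else 0

/-- Trace norm ‖M‖₁ = tr √(M Mᴴ). -/
def traceNorm (M : Matrix n n ℂ) : ℝ := ((msqrt (M * Mᴴ)).trace).re

/-- Trace distance (1/2)‖ρ − σ‖₁. -/
def traceDist (ρ σ : Matrix n n ℂ) : ℝ := traceNorm (ρ - σ) / 2

/-- Uhlmann fidelity F(ρ,σ) = (tr √(√σ ρ √σ))². -/
def fidelity (ρ σ : Matrix n n ℂ) : ℝ :=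
  (((msqrt (msqrt σ * ρ * msqrt σ)).trace).re) ^ 2

/-- Density operator: positive semidefinite with unit trace. -/
def IsDensity (ρ : Matrix n n ℂ) : Prop := ρ.PosSemidef ∧ ρ.trace = 1

/-- Rank-one operator |v⟩⟨v| associated with a vector. -/
def vecState {α : Type*} (v : α → ℂ) : Matrix α α ℂ :=
  Matrix.of fun i j => v i * (starRingEnd ℂ) (v j)

/-- Pure state: |v⟩⟨v| for some unit vector v. -/
def IsPure {α : Type*} [Fintype α] (φ : Matrix α α ℂ) : Prop :=
  ∃ v : α → ℂ, (∑ i, Complex.normSq (v i)) = 1 ∧ φ = vecState v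

/-- Set of separable states across the cut α : β. -/
def SepSet (α β : Type*) [Fintype α] [Fintype β] : Set (Matrix (α × β) (α × β) ℂ) :=
  convexHull ℝ {σ | ∃ φ ψ, IsPure φ ∧ IsPure ψ ∧ σ = φ ⊗ₖ ψ}

variable {α β : Type*} [Fintype α] [Fintype β] [DecidableEq α] [DecidableEq β]

/-- Extension Γ ⊗ id of a linear map on matrices by a k-dimensional ancilla. -/
def lmapExt (Γ : Matrix α α ℂ →ₗ[ℂ] Matrix β β ℂ) (k : ℕ)
    (M : Matrix (α × Fin k) (α × Fin k) ℂ) : Matrix (β × Fin k) (β × Fin k) ℂ :=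
  Matrix.of fun im jn => Γ (Matrix.of fun p q => M (p, im.2) (q, jn.2)) im.1 jn.1

/-- Completely positive trace-preserving linear map. -/
def IsCPTP (Γ : Matrix α α ℂ →ₗ[ℂ] Matrix β β ℂ) : Prop :=
  (∀ (k : ℕ) (M : Matrix (α × Fin k) (α × Fin k) ℂ), M.PosSemidef →
    (lmapExt Γ k M).PosSemidef) ∧ (∀ M, (Γ M).trace = M.trace)

/-- Partial trace over the second tensor factor. -/
def ptrB (M : Matrix (α × β) (α × β) ℂ) : Matrix α α ℂ :=
  Matrix.of fun i j => ∑ m, M (i, m) (j, m)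

/-- Partial trace over the first tensor factor. -/
def ptrA (M : Matrix (α × β) (α × β) ℂ) : Matrix β β ℂ :=
  Matrix.of fun i j => ∑ m, M (m, i) (m, j)

/-- Choi operator J(Λ) = Σ_{i,j} |i⟩⟨j| ⊗ Λ(|i⟩⟨j|). -/
def choi (Λ : Matrix α α ℂ →ₗ[ℂ] Matrix β β ℂ) : Matrix (α × β) (α × β) ℂ :=
  Matrix.of fun p q => Λ (Matrix.single p.1 q.1 1) p.2 q.2

/-- Entanglement-breaking channel: all extended outputs are separable. -/
def IsEB (Λ : Matrix α α ℂ →ₗ[ℂ] Matrix β β ℂ) : Prop :=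
  IsCPTP Λ ∧ ∀ (k : ℕ) (ρ : Matrix (α × Fin k) (α × Fin k) ℂ), IsDensity ρ →
    lmapExt Λ k ρ ∈ SepSet β (Fin k)

end

noncomputable section AuxDev
open Matrix Set
open scoped Kronecker ComplexOrder

set_option maxRecDepth 8000 in
lemma vecState_posSemidef {α : Type*} [Fintype α] (v : α → ℂ) :
    (vecState v).PosSemidef := by
  rw [Matrix.posSemidef_iff_dotProduct_mulVec]
  constructor
  · ext i j
    simp only [Matrix.conjTranspose_apply, vecState, of_apply, star_mul', starRingEnd_apply,
      star_star]
    ring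
  · intro x
    have : star x ⬝ᵥ (vecState v) *ᵥ x
        = star (∑ i, v i * star (x i)) * (∑ i, v i * star (x i)) := by
      simp only [dotProduct, mulVec, vecState, of_apply, Finset.mul_sum, Finset.sum_mul,
        star_sum, star_mul', Pi.star_apply, star_star, starRingEnd_apply]
      refine Finset.sum_congr rfl fun i _ => Finset.sum_congr rfl fun j _ => ?_
      ring
    rw [this]
    exact star_mul_self_nonneg _

lemma trace_vecState {α : Type*} [Fintype α] (v : α → ℂ) :
    (vecState v).trace = ((∑ i, Complex.normSq (v i) : ℝ) : ℂ) := by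
  simp only [Matrix.trace, Matrix.diag, vecState, Matrix.of_apply, Complex.ofReal_sum]
  exact Finset.sum_congr rfl fun i _ => (Complex.mul_conj _)

lemma smul_vecState {α : Type*} {r : ℝ} (hr : 0 ≤ r) (v : α → ℂ) :
    (r : ℂ) • vecState v = vecState (fun i => (Real.sqrt r : ℂ) * v i) := by
  ext i j
  simp only [Matrix.smul_apply, vecState, Matrix.of_apply, smul_eq_mul]
  rw [map_mul (starRingEnd ℂ), Complex.conj_ofReal]
  have h2 : ((Real.sqrt r : ℝ) : ℂ) * ((Real.sqrt r : ℝ) : ℂ) = (r : ℂ) := by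
    rw [← Complex.ofReal_mul, Real.mul_self_sqrt hr]
  calc (r:ℂ) * (v i * (starRingEnd ℂ) (v j))
      = (((Real.sqrt r : ℝ) : ℂ) * ((Real.sqrt r : ℝ) : ℂ)) * (v i * (starRingEnd ℂ) (v j)) := by
        rw [h2]
    _ = (↑(Real.sqrt r) * v i) * (↑(Real.sqrt r) * (starRingEnd ℂ) (v j)) := by ring

lemma posSemidef_sum {α : Type*} [Fintype α] {ι : Type*} (t : Finset ι)
    (f : ι → Matrix α α ℂ) (h : ∀ i ∈ t, (f i).PosSemidef) :
    (∑ i ∈ t, f i).PosSemidef := by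
  classical
  induction t using Finset.induction_on with
  | empty => simpa using Matrix.PosSemidef.zero
  | insert a s hx ih =>
      rw [Finset.sum_insert hx]
      exact ((h a (Finset.mem_insert_self a s)).add
        (ih fun i hi => h i (Finset.mem_insert_of_mem hi)))

lemma vecState_kron {α β : Type*} (v : α → ℂ) (w : β → ℂ) :
    vecState v ⊗ₖ vecState w = vecState (fun p : α × β => v p.1 * w p.2) := by
  ext ⟨i, m⟩ ⟨j, n⟩
  simp only [Matrix.kroneckerMap_apply, vecState, Matrix.of_apply, map_mul (starRingEnd ℂ)]
  ring

set_option maxRecDepth 8000 in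
lemma psd_decomposition {k : Type*} [Fintype k] [DecidableEq k] {B : Matrix k k ℂ}
    (hB : B.PosSemidef) :
    ∃ (d : k → ℝ) (v : k → k → ℂ), (∀ s, 0 ≤ d s) ∧
      (∀ s, (∑ i, Complex.normSq (v s i)) = 1) ∧
      B = ∑ s, ((d s : ℝ) : ℂ) • vecState (v s) := by
  have hA := hB.1
  set U : Matrix k k ℂ := (hA.eigenvectorUnitary : Matrix k k ℂ) with hU
  have hunit : star U * U = 1 := (Unitary.mem_iff.mp hA.eigenvectorUnitary.2).1
  refine ⟨hA.eigenvalues, fun s i => U i s, hB.eigenvalues_nonneg, ?_, ?_⟩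
  · intro s
    have hu : (star U * U) s s = 1 := by rw [hunit, Matrix.one_apply_eq]
    rw [Matrix.mul_apply] at hu
    have hc : ((∑ i, Complex.normSq (U i s) : ℝ) : ℂ) = 1 := by
      rw [Complex.ofReal_sum, ← hu]
      refine Finset.sum_congr rfl fun i _ => ?_
      rw [Matrix.star_apply, show star (U i s) = (starRingEnd ℂ) (U i s) from rfl,
        ← Complex.normSq_eq_conj_mul_self]
    exact_mod_cast hc
  · have hsp := hA.spectral_theorem
    rw [Unitary.conjStarAlgAut_apply, ← hU] at hsp
    nth_rewrite 1 [hsp]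
    ext i j
    simp only [Matrix.mul_apply, Matrix.diagonal_apply, Function.comp, Matrix.sum_apply,
      Matrix.smul_apply, vecState, Matrix.of_apply, Matrix.star_apply, smul_eq_mul]
    refine Finset.sum_congr rfl fun s _ => ?_
    rw [Finset.sum_eq_single s]
    · simp only [if_pos rfl, if_true, starRingEnd_apply]
      rw [mul_right_comm]; exact mul_comm _ _
    · intro b _ hb; simp [if_neg hb]
    · intro h; exact absurd (Finset.mem_univ s) h

lemma sum_smul_mem_convexHull {E : Type*} [AddCommGroup E] [Module ℝ E]
    {ι : Type*} (t : Finset ι) {w : ι → ℝ} {z : ι → E} {s : Set E}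
    (h0 : ∀ i ∈ t, 0 ≤ w i) (h1 : ∑ i ∈ t, w i = 1) (hz : ∀ i ∈ t, z i ∈ s) :
    (∑ i ∈ t, w i • z i) ∈ convexHull ℝ s := by
  classical
  have := Finset.centerMass_mem_convexHull t h0 (by rw [h1]; norm_num) hz
  rwa [Finset.centerMass_eq_of_sum_1 _ _ h1] at this

lemma isCompact_convexHull' {E : Type*} [AddCommGroup E] [Module ℝ E] [TopologicalSpace E]
    [IsTopologicalAddGroup E] [ContinuousSMul ℝ E]
    [FiniteDimensional ℝ E] {s : Set E} (hs : IsCompact s) :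
    IsCompact (convexHull ℝ s) := by
  classical
  rcases s.eq_empty_or_nonempty with rfl | ⟨x₀, hx₀⟩
  · simp [convexHull_empty, isCompact_empty]
  set n := Module.finrank ℝ E + 1 with hn
  set f : ((Fin n → ℝ) × (Fin n → E)) → E := fun p => ∑ i, p.1 i • p.2 i with hf
  have hfc : Continuous f := by
    apply continuous_finset_sum
    intro i _
    exact ((continuous_apply i).comp continuous_fst).smul
      ((continuous_apply i).comp continuous_snd)
  have key : convexHull ℝ s = f '' ((stdSimplex ℝ (Fin n)) ×ˢ (Set.univ.pi fun _ => s)) := by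
    apply Subset.antisymm
    · intro x hx
      obtain ⟨ι, hι, z, w, hzs, haff, hw0, hw1, hwz⟩ :=
        eq_pos_convex_span_of_mem_convexHull hx
      have hcard : Fintype.card ι ≤ n := by
        calc Fintype.card ι ≤ Module.finrank ℝ (vectorSpan ℝ (Set.range z)) + 1 :=
              haff.card_le_finrank_succ
          _ ≤ n := by
              rw [hn]
              exact Nat.add_le_add_right (Submodule.finrank_le _) 1
      obtain ⟨g⟩ := Function.Embedding.nonempty_of_card_le (by simpa using hcard :
        Fintype.card ι ≤ Fintype.card (Fin n))
      set w' : Fin n → ℝ := fun j => ∑ i, if g i = j then w i else 0 with hw'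
      set z' : Fin n → E := fun j => if h : ∃ i, g i = j then z h.choose else x₀ with hz'
      refine ⟨(w', z'), ⟨⟨?_, ?_⟩, ?_⟩, ?_⟩
      · intro j
        exact Finset.sum_nonneg fun i _ => by
          by_cases h : g i = j <;> simp [h, (hw0 i).le]
      · rw [Finset.sum_comm, ← hw1]
        refine Finset.sum_congr rfl fun i _ => ?_
        simp [hw']
      · intro j _
        by_cases h : ∃ i, g i = j
        · simp only [hz', dif_pos h]
          exact hzs ⟨h.choose, rfl⟩
        · simp only [hz', dif_neg h]
          exact hx₀
      · have hz'g : ∀ i, z' (g i) = z i := by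
          intro i
          have h : ∃ i', g i' = g i := ⟨i, rfl⟩
          simp only [hz', dif_pos h]
          exact congrArg z (g.injective h.choose_spec)
        calc f (w', z') = ∑ j, ∑ i, (if g i = j then w i else 0) • z' j := by
              simp only [hf, hw', Finset.sum_smul]
          _ = ∑ i, ∑ j, (if g i = j then w i else 0) • z' j := Finset.sum_comm
          _ = ∑ i, w i • z' (g i) := by
              refine Finset.sum_congr rfl fun i _ => ?_
              rw [Finset.sum_eq_single (g i)]
              · rw [if_pos rfl]
              · intro b _ hb
                rw [if_neg (fun h : g i = b => hb h.symm), zero_smul]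
              · intro h; exact absurd (Finset.mem_univ _) h
          _ = ∑ i, w i • z i := by simp [hz'g]
          _ = x := hwz
    · rintro x ⟨⟨w, z⟩, ⟨⟨hw0, hw1⟩, hzmem⟩, rfl⟩
      exact sum_smul_mem_convexHull Finset.univ (fun i _ => hw0 i) hw1
        (fun i _ => hzmem i (Set.mem_univ i))
  rw [key]
  exact ((isCompact_stdSimplex ℝ _).prod (isCompact_univ_pi fun _ => hs)).image hfc

end AuxDev

set_option linter.unusedSectionVars false
noncomputable section ChanDev
open Matrix Set
open scoped Kronecker ComplexOrder

variable {α β : Type*} [Fintype α] [Fintype β] [DecidableEq α] [DecidableEq β]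

lemma sum_swap4 {A B C D E : Type*} [Fintype A] [Fintype B] [Fintype C] [Fintype D]
    [AddCommMonoid E] (f : A → B → C → D → E) :
    ∑ m, ∑ n, ∑ i, ∑ j, f m n i j = ∑ i, ∑ m, ∑ j, ∑ n, f m n i j :=
  calc ∑ m, ∑ n, ∑ i, ∑ j, f m n i j
      = ∑ m, ∑ i, ∑ n, ∑ j, f m n i j :=
        Finset.sum_congr rfl (fun _ _ => Finset.sum_comm)
    _ = ∑ i, ∑ m, ∑ n, ∑ j, f m n i j := Finset.sum_comm
    _ = ∑ i, ∑ m, ∑ j, ∑ n, f m n i j :=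
        Finset.sum_congr rfl (fun _ _ => Finset.sum_congr rfl fun _ _ => Finset.sum_comm)

lemma realSmul_matrix {γ δ : Type*} (r : ℝ) (M : Matrix γ δ ℂ) :
    r • M = (r : ℂ) • M := by
  ext i j
  simp [Matrix.smul_apply, Complex.real_smul]

/-- The "sandwich" matrix ⟨u|⊗I M |u⟩⊗I. -/
def Bmat (u : α → ℂ) {k : ℕ} (M : Matrix (α × Fin k) (α × Fin k) ℂ) :
    Matrix (Fin k) (Fin k) ℂ :=
  Matrix.of fun m n => ∑ p : α × α, u p.1 * M (p.1, m) (p.2, n) * star (u p.2)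

lemma Bmat_posSemidef (u : α → ℂ) {k : ℕ} {M : Matrix (α × Fin k) (α × Fin k) ℂ}
    (hM : M.PosSemidef) : (Bmat u M).PosSemidef := by
  rw [Matrix.posSemidef_iff_dotProduct_mulVec]
  constructor
  · ext m n
    have hh : ∀ a b, star (M a b) = M b a := fun a b => by
      conv_rhs => rw [← hM.1]
      rfl
    simp only [Matrix.conjTranspose_apply, Bmat, Matrix.of_apply, star_sum, star_mul',
      star_star]
    rw [← Equiv.sum_comp (Equiv.prodComm α α)]
    refine Finset.sum_congr rfl fun p _ => ?_
    simp only [Equiv.prodComm_apply, Prod.swap]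
    rw [hh]
    ring
  · intro x
    have key : star x ⬝ᵥ (Bmat u M) *ᵥ x
        = star (fun q : α × Fin k => star (u q.1) * x q.2) ⬝ᵥ
            M *ᵥ (fun q : α × Fin k => star (u q.1) * x q.2) := by
      simp only [dotProduct, mulVec, Bmat, Matrix.of_apply, Pi.star_apply, star_mul',
        star_star, Finset.mul_sum, Finset.sum_mul, Fintype.sum_prod_type]
      rw [sum_swap4]
      refine Finset.sum_congr rfl fun i _ => Finset.sum_congr rfl fun m _ =>
        Finset.sum_congr rfl fun j _ => Finset.sum_congr rfl fun n _ => ?_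
      ring
    rw [key]
    exact hM.dotProduct_mulVec_nonneg _

/-- The linear map associated with a Choi-type operator. -/
def toMap (J : Matrix (α × β) (α × β) ℂ) : Matrix α α ℂ →ₗ[ℂ] Matrix β β ℂ where
  toFun M := Matrix.of fun x y => ∑ p : α × α, M p.1 p.2 * J (p.1, x) (p.2, y)
  map_add' M N := by
    ext x y
    simp [Matrix.add_apply, add_mul, Finset.sum_add_distrib]
  map_smul' c M := by
    ext x y
    simp [Matrix.smul_apply, smul_eq_mul, Finset.mul_sum, mul_assoc]

lemma toMap_apply (J : Matrix (α × β) (α × β) ℂ) (M : Matrix α α ℂ) (x y : β) :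
    toMap J M x y = ∑ p : α × α, M p.1 p.2 * J (p.1, x) (p.2, y) := rfl

lemma choi_toMap (J : Matrix (α × β) (α × β) ℂ) : choi (toMap J) = J := by
  ext ⟨i, x⟩ ⟨j, y⟩
  show ∑ p : α × α, Matrix.single i j 1 p.1 p.2 * J (p.1, x) (p.2, y) = J (i, x) (j, y)
  rw [Finset.sum_eq_single ((i, j) : α × α)]
  · simp [Matrix.single]
  · intro p _ hp
    have : ¬(i = p.1 ∧ j = p.2) := by
      rintro ⟨h1, h2⟩
      exact hp (Prod.ext h1.symm h2.symm)
    simp [Matrix.single, this]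
  · intro h; exact absurd (Finset.mem_univ _) h

lemma trace_toMap {J : Matrix (α × β) (α × β) ℂ} (hJ : ptrB J = 1) (M : Matrix α α ℂ) :
    (toMap J M).trace = M.trace := by
  have hJ' : ∀ i j : α, (∑ x, J (i, x) (j, x)) = if i = j then 1 else 0 := by
    intro i j
    have := congrFun (congrFun hJ i) j
    simpa [ptrB, Matrix.one_apply] using this
  simp only [Matrix.trace, Matrix.diag, toMap_apply]
  rw [Finset.sum_comm]
  have : ∀ p : α × α, ∑ x : β, M p.1 p.2 * J (p.1, x) (p.2, x)
      = M p.1 p.2 * (if p.1 = p.2 then 1 else 0) := by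
    intro p
    rw [← Finset.mul_sum, hJ' p.1 p.2]
  rw [Finset.sum_congr rfl fun p _ => this p]
  rw [Fintype.sum_prod_type]
  refine Finset.sum_congr rfl fun i _ => ?_
  rw [Finset.sum_eq_single i]
  · simp
  · intro j _ hj
    simp [Ne.symm hj]
  · intro h; exact absurd (Finset.mem_univ _) h

lemma trace_lmapExt (Γ : Matrix α α ℂ →ₗ[ℂ] Matrix β β ℂ)
    (hΓ : ∀ N, (Γ N).trace = N.trace) (k : ℕ) (M : Matrix (α × Fin k) (α × Fin k) ℂ) :
    (lmapExt Γ k M).trace = M.trace := by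
  simp only [Matrix.trace, Matrix.diag]
  rw [Fintype.sum_prod_type, Finset.sum_comm]
  have : ∀ m : Fin k, ∑ x : β, lmapExt Γ k M (x, m) (x, m)
      = ∑ p : α, M (p, m) (p, m) := by
    intro m
    have h1 : ∑ x : β, lmapExt Γ k M (x, m) (x, m)
        = (Γ (Matrix.of fun p q => M (p, m) (q, m))).trace := rfl
    rw [h1, hΓ]
    rfl
  rw [Finset.sum_congr rfl fun m _ => this m, ← Finset.sum_comm]
  exact (Fintype.sum_prod_type (fun q : α × Fin k => M q q)).symm

lemma lmapExt_toMap {J : Matrix (α × β) (α × β) ℂ} {ι : Type*} (T : Finset ι)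
    (r : ι → ℝ) (u : ι → α → ℂ) (w : ι → β → ℂ)
    (hJ : J = ∑ i ∈ T, r i • (vecState (u i) ⊗ₖ vecState (w i)))
    (k : ℕ) (M : Matrix (α × Fin k) (α × Fin k) ℂ) :
    lmapExt (toMap J) k M
      = ∑ i ∈ T, ((r i : ℝ) : ℂ) • (vecState (w i) ⊗ₖ Bmat (u i) M) := by
  subst hJ
  ext ⟨x, m⟩ ⟨y, n⟩
  show ∑ p : α × α, M (p.1, m) (p.2, n) *
      (∑ i ∈ T, r i • (vecState (u i) ⊗ₖ vecState (w i))) (p.1, x) (p.2, y) = _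
  simp only [Matrix.sum_apply, Matrix.smul_apply, Matrix.kroneckerMap_apply, vecState,
    Matrix.of_apply, Bmat, smul_eq_mul, Complex.real_smul, Finset.mul_sum]
  rw [Finset.sum_comm]
  refine Finset.sum_congr rfl fun i _ => ?_
  refine Finset.sum_congr rfl fun p _ => ?_
  simp only [starRingEnd_apply]
  ring
end ChanDev

set_option linter.unusedSectionVars false
noncomputable section EBDev
open Matrix Set
open scoped Kronecker ComplexOrder

variable {α β : Type*} [Fintype α] [Fintype β] [DecidableEq α] [DecidableEq β]

lemma kron_sum {γ δ : Type*} (A : Matrix γ γ ℂ) {ι : Type*} (t : Finset ι)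
    (f : ι → Matrix δ δ ℂ) :
    A ⊗ₖ (∑ s ∈ t, f s) = ∑ s ∈ t, A ⊗ₖ f s := by
  ext ⟨i, m⟩ ⟨j, n⟩
  simp [Matrix.sum_apply, Finset.mul_sum]

lemma kron_smul' {γ δ : Type*} (A : Matrix γ γ ℂ) (c : ℂ) (B : Matrix δ δ ℂ) :
    A ⊗ₖ (c • B) = c • (A ⊗ₖ B) := by
  ext ⟨i, m⟩ ⟨j, n⟩
  simp only [Matrix.kroneckerMap_apply, Matrix.smul_apply, smul_eq_mul]
  ring

lemma smul_kron_psd {γ : Type*} [Fintype γ] [DecidableEq γ] {r : ℝ} (hr : 0 ≤ r) (w : β → ℂ)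
    {B : Matrix γ γ ℂ} (hB : B.PosSemidef) :
    (((r : ℝ) : ℂ) • (vecState w ⊗ₖ B)).PosSemidef := by
  obtain ⟨d, v, hd, hv, hBe⟩ := psd_decomposition hB
  rw [hBe, kron_sum, Finset.smul_sum]
  apply _root_.posSemidef_sum
  intro s _
  rw [kron_smul', smul_smul, ← Complex.ofReal_mul, vecState_kron,
    smul_vecState (mul_nonneg hr (hd s))]
  exact vecState_posSemidef _

lemma normSq_pair_sum {γ : Type*} [Fintype γ] (w : β → ℂ) (v : γ → ℂ)
    (hw : ∑ x, Complex.normSq (w x) = 1) (hv : ∑ m, Complex.normSq (v m) = 1) :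
    ∑ p : β × γ, Complex.normSq (w p.1 * v p.2) = 1 := by
  rw [Fintype.sum_prod_type]
  have : ∀ x : β, ∑ m : γ, Complex.normSq (w x * v m)
      = Complex.normSq (w x) * ∑ m, Complex.normSq (v m) := by
    intro x
    rw [Finset.mul_sum]
    exact Finset.sum_congr rfl fun m _ => Complex.normSq_mul _ _
  rw [Finset.sum_congr rfl fun x _ => this x]
  simp only [hv, mul_one, hw]

lemma isEB_toMap {J : Matrix (α × β) (α × β) ℂ} {ι : Type*} (T : Finset ι)
    (c : ι → ℝ) (u : ι → α → ℂ) (w : ι → β → ℂ)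
    (hc0 : ∀ i ∈ T, 0 ≤ c i)
    (hw : ∀ i ∈ T, ∑ x, Complex.normSq (w i x) = 1)
    (hJ : J = ∑ i ∈ T, c i • (vecState (u i) ⊗ₖ vecState (w i)))
    (hptr : ptrB J = 1) :
    IsEB (toMap J) := by
  have hTP : ∀ N, ((toMap J) N).trace = N.trace := trace_toMap hptr
  refine ⟨⟨?_, hTP⟩, ?_⟩
  · intro k M hM
    rw [lmapExt_toMap T c u w hJ k M]
    exact _root_.posSemidef_sum _ _ fun i hi =>
      smul_kron_psd (hc0 i hi) (w i) (Bmat_posSemidef (u i) hM)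
  · intro k ρ hρ
    have hBp : ∀ i, (Bmat (u i) ρ).PosSemidef := fun i => Bmat_posSemidef (u i) hρ.1
    choose d v hd hv hBe using fun i => psd_decomposition (hBp i)
    have hform : ∑ i ∈ T, ((c i : ℝ) : ℂ) • (vecState (w i) ⊗ₖ Bmat (u i) ρ)
        = ∑ q ∈ T ×ˢ (Finset.univ : Finset (Fin k)),
            (c q.1 * d q.1 q.2) • (vecState (w q.1) ⊗ₖ vecState (v q.1 q.2)) := by
      rw [Finset.sum_product]
      refine Finset.sum_congr rfl fun i hi => ?_
      rw [hBe i, kron_sum, Finset.smul_sum]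
      refine Finset.sum_congr rfl fun s _ => ?_
      rw [kron_smul', smul_smul, ← Complex.ofReal_mul, ← realSmul_matrix]
    have hTr : ∀ (i : ι) (s : Fin k),
        (vecState (w i) ⊗ₖ vecState (v i s)).trace = ((∑ p : β × Fin k,
          Complex.normSq (w i p.1 * v i s p.2) : ℝ) : ℂ) := by
      intro i s
      rw [vecState_kron, trace_vecState]
    have hsum : ∑ q ∈ T ×ˢ (Finset.univ : Finset (Fin k)), (c q.1 * d q.1 q.2) = 1 := by
      have e1 : (lmapExt (toMap J) k ρ).trace = 1 := by
        rw [trace_lmapExt _ hTP, hρ.2]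
      rw [lmapExt_toMap T c u w hJ k ρ, hform] at e1
      rw [Matrix.trace_sum] at e1
      have e2 : ∑ q ∈ T ×ˢ (Finset.univ : Finset (Fin k)),
          ((c q.1 * d q.1 q.2 : ℝ) : ℂ)
          = ∑ q ∈ T ×ˢ (Finset.univ : Finset (Fin k)),
              ((c q.1 * d q.1 q.2) • (vecState (w q.1) ⊗ₖ vecState (v q.1 q.2))).trace := by
        refine Finset.sum_congr rfl fun q hq => ?_
        rw [Finset.mem_product] at hq
        rw [Matrix.trace_smul, hTr q.1 q.2,
          normSq_pair_sum (w q.1) (v q.1 q.2) (hw q.1 hq.1) (hv q.1 q.2)]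
        simp [Complex.real_smul]
      rw [e1] at e2
      have := e2
      rw [← Complex.ofReal_sum] at this
      exact_mod_cast this
    rw [lmapExt_toMap T c u w hJ k ρ, hform]
    refine sum_smul_mem_convexHull _ ?_ hsum ?_
    · rintro ⟨i, s⟩ hq
      rw [Finset.mem_product] at hq
      exact mul_nonneg (hc0 _ hq.1) (hd _ _)
    · rintro ⟨i, s⟩ hq
      rw [Finset.mem_product] at hq
      exact ⟨vecState (w i), vecState (v i s), ⟨w i, hw i hq.1, rfl⟩,
        ⟨v i s, hv i s, rfl⟩, rfl⟩
end EBDev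

set_option linter.unusedSectionVars false
noncomputable section FwDev
open Matrix Set
open scoped Kronecker ComplexOrder

variable {α β : Type*} [Fintype α] [Fintype β] [DecidableEq α] [DecidableEq β]

lemma trace_stdBasisMatrix (i j : α) :
    (Matrix.single i j (1 : ℂ)).trace = if i = j then 1 else 0 := by
  simp only [Matrix.trace, Matrix.diag, Matrix.single, Matrix.of_apply]
  by_cases h : i = j
  · subst h
    rw [Finset.sum_eq_single i] <;> simp +contextual [eq_comm]
  · rw [Finset.sum_eq_zero]
    · rw [if_neg h]
    · intro m _
      rw [if_neg]
      rintro ⟨rfl, rfl⟩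
      exact h rfl

/-- Swap of the two tensor factors, as a real-linear map. -/
def swapLM (γ δ : Type*) : Matrix (γ × δ) (γ × δ) ℂ →ₗ[ℝ] Matrix (δ × γ) (δ × γ) ℂ where
  toFun M := Matrix.of fun p q => M (p.2, p.1) (q.2, q.1)
  map_add' M N := rfl
  map_smul' c M := rfl

lemma swapLM_sep {γ δ : Type*} [Fintype γ] [Fintype δ] {M : Matrix (γ × δ) (γ × δ) ℂ}
    (hM : M ∈ SepSet γ δ) : swapLM γ δ M ∈ SepSet δ γ := by
  have himg := (swapLM γ δ).image_convexHull
    {σ : Matrix (γ × δ) (γ × δ) ℂ | ∃ φ ψ, IsPure φ ∧ IsPure ψ ∧ σ = φ ⊗ₖ ψ}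
  have hmem : swapLM γ δ M ∈ (swapLM γ δ) '' (SepSet γ δ) := Set.mem_image_of_mem _ hM
  rw [SepSet, himg] at hmem
  refine convexHull_mono ?_ hmem
  rintro X ⟨Y, ⟨φ, ψ, hφ, hψ, rfl⟩, rfl⟩
  refine ⟨ψ, φ, hψ, hφ, ?_⟩
  ext ⟨m, x⟩ ⟨n, y⟩
  show (φ ⊗ₖ ψ) (x, m) (y, n) = (ψ ⊗ₖ φ) (m, x) (n, y)
  simp only [Matrix.kroneckerMap_apply]
  ring

lemma exists_sep_of_isEB {e b : ℕ} (he : 0 < e)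
    {Λ : Matrix (Fin e) (Fin e) ℂ →ₗ[ℂ] Matrix (Fin b) (Fin b) ℂ} (hΛ : IsEB Λ) :
    ∃ σ ∈ SepSet (Fin e) (Fin b),
      ptrB σ = (e : ℝ)⁻¹ • (1 : Matrix (Fin e) (Fin e) ℂ) ∧ choi Λ = (e : ℝ) • σ := by
  have henz : ((e : ℕ) : ℂ) ≠ 0 := Nat.cast_ne_zero.mpr he.ne'
  set σ : Matrix (Fin e × Fin b) (Fin e × Fin b) ℂ :=
    Matrix.of fun p q => ((e : ℕ) : ℂ)⁻¹ * choi Λ p q with hσdef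
  have htr : ∀ i j : Fin e, (Λ (Matrix.single i j 1)).trace
      = if i = j then 1 else 0 := by
    intro i j
    rw [hΛ.1.2, trace_stdBasisMatrix]
  refine ⟨σ, ?_, ?_, ?_⟩
  · -- separability via the maximally entangled state
    set Ω : Fin e × Fin e → ℂ := fun p => if p.1 = p.2 then 1 else 0 with hΩ
    have hnormΩ : ∑ p : Fin e × Fin e, Complex.normSq (Ω p) = e := by
      rw [Fintype.sum_prod_type]
      have : ∀ i m : Fin e, Complex.normSq (Ω (i, m)) = if i = m then 1 else 0 := by
        intro i m
        by_cases h : i = m <;> simp [hΩ, h]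
      rw [Finset.sum_congr rfl fun i _ => Finset.sum_congr rfl fun m _ => this i m]
      simp
    set ρ : Matrix (Fin e × Fin e) (Fin e × Fin e) ℂ :=
      (((e : ℝ)⁻¹ : ℝ) : ℂ) • vecState Ω with hρdef
    have hdens : IsDensity ρ := by
      constructor
      · rw [hρdef, smul_vecState (inv_nonneg.mpr (Nat.cast_nonneg e))]
        exact vecState_posSemidef _
      · rw [hρdef, Matrix.trace_smul, trace_vecState, hnormΩ]
        push_cast
        rw [smul_eq_mul, inv_mul_cancel₀ henz]
    have hsep0 := hΛ.2 e ρ hdens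
    have hσeq : σ = swapLM (Fin b) (Fin e) (lmapExt Λ e ρ) := by
      ext ⟨m, x⟩ ⟨n, y⟩
      show ((e : ℕ) : ℂ)⁻¹ * Λ (Matrix.single m n 1) x y
        = Λ (Matrix.of fun p q => ρ (p, m) (q, n)) x y
      have hblock : (Matrix.of fun p q => ρ (p, m) (q, n))
          = (((e : ℕ) : ℂ)⁻¹) • Matrix.single m n (1 : ℂ) := by
        ext p q
        show (((e : ℝ)⁻¹ : ℝ) : ℂ) * (Ω (p, m) * (starRingEnd ℂ) (Ω (q, n))) = _
        have : (starRingEnd ℂ) (Ω (q, n)) = Ω (q, n) := by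
          by_cases h : q = n <;> simp [hΩ, h]
        rw [this]
        simp only [Matrix.smul_apply, Matrix.single, Matrix.of_apply, smul_eq_mul, hΩ]
        push_cast
        by_cases h1 : p = m <;> by_cases h2 : q = n
        · simp [h1, h2]
        · simp [h1, h2, Ne.symm h2]
        · simp [h1, h2, Ne.symm h1]
        · simp [h1, h2, Ne.symm h1]
      rw [hblock, _root_.map_smul]
      rfl
    rw [hσeq]
    exact swapLM_sep hsep0
  · ext i j
    show ∑ m, ((e : ℕ) : ℂ)⁻¹ * Λ (Matrix.single i j 1) m m = _
    rw [← Finset.mul_sum]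
    have : ∑ m, Λ (Matrix.single i j 1) m m
        = (Λ (Matrix.single i j 1)).trace := rfl
    rw [this, htr i j]
    have : ((e : ℝ)⁻¹ • (1 : Matrix (Fin e) (Fin e) ℂ)) i j
        = ((e : ℕ) : ℂ)⁻¹ * if i = j then 1 else 0 := by
      simp only [Matrix.smul_apply, Matrix.one_apply, Complex.real_smul]
      push_cast
      by_cases h : i = j <;> simp [h]
    rw [this]
  · ext p q
    show choi Λ p q = (e : ℝ) • (((e : ℕ) : ℂ)⁻¹ * choi Λ p q)
    rw [Complex.real_smul]
    push_cast
    rw [← mul_assoc, mul_inv_cancel₀ henz, one_mul]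

end FwDev

set_option linter.unusedSectionVars false
noncomputable section TopoDev
open Matrix Set
open scoped Kronecker ComplexOrder

variable {α β : Type*} [Fintype α] [Fintype β] [DecidableEq α] [DecidableEq β]

lemma isCompact_sph {γ : Type*} [Fintype γ] :
    IsCompact {v : γ → ℂ | ∑ i, Complex.normSq (v i) = 1} := by
  have hcl : IsClosed {v : γ → ℂ | ∑ i, Complex.normSq (v i) = 1} :=
    isClosed_eq (continuous_finset_sum _ fun i _ =>
      Complex.continuous_normSq.comp (continuous_apply i)) continuous_const
  have hsub : {v : γ → ℂ | ∑ i, Complex.normSq (v i) = 1} ⊆ Metric.closedBall 0 1 := by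
    intro v hv
    rw [Metric.mem_closedBall, dist_zero_right]
    refine (pi_norm_le_iff_of_nonneg zero_le_one).mpr fun i => ?_
    have h1 : Complex.normSq (v i) ≤ 1 := by
      rw [← hv]
      exact Finset.single_le_sum (fun j _ => Complex.normSq_nonneg (v j)) (Finset.mem_univ i)
    have h2 : ‖v i‖ = Real.sqrt (Complex.normSq (v i)) := by
      rw [Complex.norm_def]
    rw [h2, show (1:ℝ) = Real.sqrt 1 from (Real.sqrt_one).symm]
    exact Real.sqrt_le_sqrt h1
  exact (isCompact_closedBall 0 1).of_isClosed_subset hcl hsub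

lemma isCompact_sepSet : IsCompact (SepSet α β) := by
  apply isCompact_convexHull'
  have hset : {σ : Matrix (α × β) (α × β) ℂ | ∃ φ ψ, IsPure φ ∧ IsPure ψ ∧ σ = φ ⊗ₖ ψ}
      = (fun vw : (α → ℂ) × (β → ℂ) => vecState vw.1 ⊗ₖ vecState vw.2) ''
          ({v | ∑ i, Complex.normSq (v i) = 1} ×ˢ {w | ∑ i, Complex.normSq (w i) = 1}) := by
    ext σ
    constructor
    · rintro ⟨φ, ψ, ⟨v, hv, rfl⟩, ⟨w, hw, rfl⟩, rfl⟩
      exact ⟨(v, w), ⟨hv, hw⟩, rfl⟩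
    · rintro ⟨⟨v, w⟩, ⟨hv, hw⟩, rfl⟩
      exact ⟨_, _, ⟨v, hv, rfl⟩, ⟨w, hw, rfl⟩, rfl⟩
  rw [hset]
  refine (isCompact_sph.prod isCompact_sph).image ?_
  apply continuous_matrix
  rintro ⟨x, m⟩ ⟨y, n⟩
  show Continuous fun vw : (α → ℂ) × (β → ℂ) =>
    (vw.1 x * (starRingEnd ℂ) (vw.1 y)) * (vw.2 m * (starRingEnd ℂ) (vw.2 n))
  have c1 : Continuous fun vw : (α → ℂ) × (β → ℂ) => vw.1 x :=
    (continuous_apply x).comp continuous_fst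
  have c2 : Continuous fun vw : (α → ℂ) × (β → ℂ) => vw.1 y :=
    (continuous_apply y).comp continuous_fst
  have c3 : Continuous fun vw : (α → ℂ) × (β → ℂ) => vw.2 m :=
    (continuous_apply m).comp continuous_snd
  have c4 : Continuous fun vw : (α → ℂ) × (β → ℂ) => vw.2 n :=
    (continuous_apply n).comp continuous_snd
  exact (c1.mul (Complex.continuous_conj.comp c2)).mul
    (c3.mul (Complex.continuous_conj.comp c4))

lemma continuous_ptrB :
    Continuous (ptrB : Matrix (α × β) (α × β) ℂ → Matrix α α ℂ) := by
  apply continuous_matrix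
  intro i j
  show Continuous fun M : Matrix (α × β) (α × β) ℂ => ∑ m, M (i, m) (j, m)
  exact continuous_finset_sum _ fun m _ =>
    (continuous_apply (j, m)).comp (continuous_apply (i, m))

end TopoDev


noncomputable section

/-- Set of Choi operators of entanglement-breaking channels from ℂ^e to ℂ^b. -/
noncomputable def EBChoiSet (e b : ℕ) : Set (Matrix (Fin e × Fin b) (Fin e × Fin b) ℂ) :=
  {J | ∃ Λ : Matrix (Fin e) (Fin e) ℂ →ₗ[ℂ] Matrix (Fin b) (Fin b) ℂ, IsEB Λ ∧ J = choi Λ}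

set_option linter.unusedSectionVars false
open Matrix Set
open scoped Kronecker ComplexOrder

lemma mem_EBChoiSet_of {e b : ℕ} (he : 0 < e)
    {J σ : Matrix (Fin e × Fin b) (Fin e × Fin b) ℂ}
    (hσ : σ ∈ SepSet (Fin e) (Fin b))
    (hptr : ptrB σ = (e : ℝ)⁻¹ • (1 : Matrix (Fin e) (Fin e) ℂ))
    (hJ : J = (e : ℝ) • σ) : J ∈ EBChoiSet e b := by
  classical
  rw [SepSet, convexHull_eq] at hσ
  obtain ⟨ι, T, cw, z, h0, h1, hzS, hcm⟩ := hσ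
  rw [Finset.centerMass_eq_of_sum_1 _ _ h1] at hcm
  have hzS' : ∀ i ∈ T, ∃ u' : Fin e → ℂ, ∃ w' : Fin b → ℂ,
      (∑ a, Complex.normSq (u' a)) = 1 ∧ (∑ x, Complex.normSq (w' x)) = 1 ∧
        z i = vecState u' ⊗ₖ vecState w' := by
    intro i hi
    obtain ⟨φ, ψ, ⟨u', hu', rfl⟩, ⟨w', hw', rfl⟩, hzz⟩ := hzS i hi
    exact ⟨u', w', hu', hw', hzz⟩
  choose! uu ww huu hww hzz using hzS'
  have hJdec : J = ∑ i ∈ T, ((e : ℝ) * cw i) • (vecState (uu i) ⊗ₖ vecState (ww i)) := by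
    rw [hJ, ← hcm, Finset.smul_sum]
    refine Finset.sum_congr rfl fun i hi => ?_
    rw [smul_smul, hzz i hi]
  have hen : (e : ℝ) ≠ 0 := Nat.cast_ne_zero.mpr he.ne'
  have hptrJ : ptrB J = 1 := by
    rw [hJ]
    ext i j
    show ∑ m, ((e:ℝ) • σ) (i, m) (j, m) = _
    have h3 : ∑ m, ((e:ℝ) • σ) (i, m) (j, m) = (e:ℝ) • ∑ m, σ (i, m) (j, m) := by
      rw [Finset.smul_sum]
      rfl
    rw [h3, show (∑ m, σ (i, m) (j, m)) = ptrB σ i j from rfl]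
    have h4 : ptrB σ i j = (e:ℝ)⁻¹ • ((1 : Matrix (Fin e) (Fin e) ℂ) i j) := by
      rw [hptr]
      rfl
    rw [h4, smul_smul, mul_inv_cancel₀ hen, one_smul]
  exact ⟨toMap J, isEB_toMap T (fun i => (e : ℝ) * cw i) uu ww
    (fun i hi => mul_nonneg (Nat.cast_nonneg e) (h0 i hi)) hww hJdec hptrJ,
    (choi_toMap J).symm⟩

theorem ebChoiSet_characterization' {e b : ℕ} (he : 0 < e) :
    EBChoiSet e b =
        {J | ∃ σ ∈ SepSet (Fin e) (Fin b),
          ptrB σ = (e : ℝ)⁻¹ • (1 : Matrix (Fin e) (Fin e) ℂ) ∧ J = (e : ℝ) • σ} ∧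
      Convex ℝ (EBChoiSet e b) ∧ IsCompact (EBChoiSet e b) := by
  have hchar : EBChoiSet e b =
      {J | ∃ σ ∈ SepSet (Fin e) (Fin b),
        ptrB σ = (e : ℝ)⁻¹ • (1 : Matrix (Fin e) (Fin e) ℂ) ∧ J = (e : ℝ) • σ} := by
    ext J
    constructor
    · rintro ⟨Λ, hΛ, rfl⟩
      exact exists_sep_of_isEB he hΛ
    · rintro ⟨σ, h1, h2, h3⟩
      exact mem_EBChoiSet_of he h1 h2 h3
  have himg : {J | ∃ σ ∈ SepSet (Fin e) (Fin b),
        ptrB σ = (e : ℝ)⁻¹ • (1 : Matrix (Fin e) (Fin e) ℂ) ∧ J = (e : ℝ) • σ}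
      = (fun σ => (e:ℝ) • σ) '' (SepSet (Fin e) (Fin b) ∩
          {σ | ptrB σ = (e : ℝ)⁻¹ • (1 : Matrix (Fin e) (Fin e) ℂ)}) := by
    ext J
    simp only [Set.mem_image, Set.mem_inter_iff, Set.mem_setOf_eq]
    constructor
    · rintro ⟨σ, h1, h2, h3⟩; exact ⟨σ, ⟨h1, h2⟩, h3.symm⟩
    · rintro ⟨σ, ⟨h1, h2⟩, h3⟩; exact ⟨σ, h1, h2, h3.symm⟩
  refine ⟨hchar, ?_, ?_⟩
  · rw [hchar, himg]
    have hKconv : Convex ℝ (SepSet (Fin e) (Fin b) ∩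
        {σ | ptrB σ = (e : ℝ)⁻¹ • (1 : Matrix (Fin e) (Fin e) ℂ)}) := by
      refine (convex_convexHull ℝ _).inter ?_
      intro σ1 hσ1 σ2 hσ2 a c ha hc hac
      show ptrB _ = _
      have hadd : ptrB (a • σ1 + c • σ2) = a • ptrB σ1 + c • ptrB σ2 := by
        ext i j
        show ∑ m, (a • σ1 + c • σ2) (i, m) (j, m)
          = a • (∑ m, σ1 (i, m) (j, m)) + c • (∑ m, σ2 (i, m) (j, m))
        simp only [Matrix.add_apply, Matrix.smul_apply, Finset.sum_add_distrib,
          Finset.smul_sum]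
      rw [hadd, Set.mem_setOf_eq.mp hσ1, Set.mem_setOf_eq.mp hσ2, ← add_smul, hac, one_smul]
    exact hKconv.is_linear_image (IsLinearMap.isLinearMap_smul _)
  · rw [hchar, himg]
    have hcl : IsClosed {σ : Matrix (Fin e × Fin b) (Fin e × Fin b) ℂ |
        ptrB σ = (e : ℝ)⁻¹ • (1 : Matrix (Fin e) (Fin e) ℂ)} :=
      isClosed_eq continuous_ptrB continuous_const
    exact ((isCompact_sepSet.inter_right hcl).image (continuous_const_smul _))


theorem ebChoiSet_characterization {e b : ℕ} (he : 0 < e) :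
    EBChoiSet e b =
        {J | ∃ σ ∈ SepSet (Fin e) (Fin b),
          ptrB σ = (e : ℝ)⁻¹ • (1 : Matrix (Fin e) (Fin e) ℂ) ∧ J = (e : ℝ) • σ} ∧
      Convex ℝ (EBChoiSet e b) ∧ IsCompact (EBChoiSet e b) :=
  ebChoiSet_characterization' he

end
end

section
/- If Λ : D(ℂ^D) → D(ℂ^d ⊗ ℂ^d) is an (ε,δ)-strong disentangler and Γ(ρ) = tr₂(Λ(ρ)) is the induced channel to the first output system, then: (1) for every finite-dimensional H_R and every state ρ on ℂ^D ⊗ H_R, (Γ ⊗ id_R)(ρ) is within trace distance ε of SEP(ℂ^d, H_R), and (2) min over pure ψ of max over ρ of F(ψ, Γ(ρ)) ≥ 1 − δ. -/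
open Matrix
open scoped Kronecker ComplexOrder

noncomputable section

variable {n : Type*} [Fintype n] [DecidableEq n]

variable {α β : Type*} [Fintype α] [Fintype β] [DecidableEq α] [DecidableEq β]

namespace SD

variable {X : Matrix n n ℂ}

/-- Spectral functional calculus for a Hermitian matrix. -/
def specF (hX : X.IsHermitian) (f : ℝ → ℝ) : Matrix n n ℂ :=
  (hX.eigenvectorUnitary : Matrix n n ℂ) *
    diagonal (fun i => (f (hX.eigenvalues i) : ℂ)) *
    (hX.eigenvectorUnitary : Matrix n n ℂ)ᴴ

lemma specF_id (hX : X.IsHermitian) : specF hX id = X := by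
  conv_rhs => rw [hX.spectral_theorem]
  rfl

lemma specF_isHermitian (hX : X.IsHermitian) (f : ℝ → ℝ) : (specF hX f).IsHermitian := by
  unfold specF
  simp only [IsHermitian, conjTranspose_mul, conjTranspose_conjTranspose,
    diagonal_conjTranspose]
  rw [mul_assoc]
  congr 2
  ext i j
  simp [Pi.star_def, Complex.star_def]

lemma specF_posSemidef (hX : X.IsHermitian) {f : ℝ → ℝ}
    (hf : ∀ i, 0 ≤ f (hX.eigenvalues i)) : (specF hX f).PosSemidef := by
  have h : (diagonal (fun i => (f (hX.eigenvalues i) : ℂ))).PosSemidef := by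
    refine PosSemidef.diagonal fun i => ?_
    exact Complex.zero_le_real.mpr (hf i)
  simpa [specF, Matrix.star_eq_conjTranspose] using
    h.mul_mul_conjTranspose_same (hX.eigenvectorUnitary : Matrix n n ℂ)

lemma unitary_mul (hX : X.IsHermitian) :
    (hX.eigenvectorUnitary : Matrix n n ℂ)ᴴ * (hX.eigenvectorUnitary : Matrix n n ℂ) = 1 := by
  rw [← Matrix.star_eq_conjTranspose]
  exact Matrix.mem_unitaryGroup_iff'.mp hX.eigenvectorUnitary.2

lemma mul_unitary (hX : X.IsHermitian) :
    (hX.eigenvectorUnitary : Matrix n n ℂ) * (hX.eigenvectorUnitary : Matrix n n ℂ)ᴴ = 1 := by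
  rw [← Matrix.star_eq_conjTranspose]
  exact Matrix.mem_unitaryGroup_iff.mp hX.eigenvectorUnitary.2

lemma specF_mul (hX : X.IsHermitian) (f g : ℝ → ℝ) :
    specF hX f * specF hX g = specF hX (fun t => f t * g t) := by
  unfold specF
  set U := (hX.eigenvectorUnitary : Matrix n n ℂ)
  simp only [Matrix.mul_assoc]
  rw [← Matrix.mul_assoc Uᴴ U, unitary_mul hX, Matrix.one_mul,
    ← Matrix.mul_assoc (diagonal _) (diagonal _), diagonal_mul_diagonal]
  push_cast
  rfl

lemma specF_add (hX : X.IsHermitian) (f g : ℝ → ℝ) :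
    specF hX f + specF hX g = specF hX (fun t => f t + g t) := by
  unfold specF
  rw [← add_mul, ← mul_add, diagonal_add]
  push_cast
  rfl

lemma specF_sub (hX : X.IsHermitian) (f g : ℝ → ℝ) :
    specF hX f - specF hX g = specF hX (fun t => f t - g t) := by
  unfold specF
  rw [← sub_mul, ← mul_sub, diagonal_sub]
  push_cast
  rfl

lemma specF_one (hX : X.IsHermitian) : specF hX (fun _ => 1) = 1 := by
  unfold specF
  rw [show (diagonal (fun _ : n => ((1:ℝ) : ℂ))) = 1 by simp, mul_one]
  exact mul_unitary hX

lemma trace_specF (hX : X.IsHermitian) (f : ℝ → ℝ) :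
    (specF hX f).trace = ∑ i, (f (hX.eigenvalues i) : ℂ) := by
  unfold specF
  rw [trace_mul_cycle, unitary_mul hX, Matrix.one_mul, trace_diagonal]

lemma trace_eq_sum_eigenvalues (hX : X.IsHermitian) :
    X.trace = ∑ i, (hX.eigenvalues i : ℂ) := by
  conv_lhs => rw [← specF_id hX]
  exact trace_specF hX id

lemma traceNorm_eq_sum_abs (hX : X.IsHermitian) :
    traceNorm X = ∑ i, |hX.eigenvalues i| := by
  have hXX : X * Xᴴ = specF hX (fun t => t * t) := by
    conv_lhs => rw [hX.eq, ← specF_id hX, specF_mul hX id id]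
    rfl
  have hpsd : (X * Xᴴ).PosSemidef := Matrix.posSemidef_self_mul_conjTranspose X
  have habs : (specF hX (fun t => |t|)).PosSemidef :=
    specF_posSemidef hX (fun i => abs_nonneg _)
  have hsq : specF hX (fun t => |t|) ^ 2 = X * Xᴴ := by
    rw [pow_two, specF_mul hX, hXX]
    exact congrArg (specF hX) (funext fun t => abs_mul_abs_self t)
  have : msqrt (X * Xᴴ) = specF hX (fun t => |t|) := by
    unfold msqrt
    rw [dif_pos hpsd]
    have key : ∀ {Y : Matrix n n ℂ} (hY : Y.IsHermitian) (f : ℝ → ℝ), cfc f Y = specF hY f := by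
      intro Y hY f
      rw [hY.cfc_eq, IsHermitian.cfc, Unitary.conjStarAlgAut_apply]
      rfl
    calc _ = specF hpsd.1 Real.sqrt := rfl
      _ = cfc Real.sqrt (X * Xᴴ) := (key _ _).symm
      _ = cfc Real.sqrt (cfc (fun t => t * t) X) := by rw [key hX, ← hXX]
      _ = cfc (fun t => Real.sqrt (t * t)) X := by
        rw [← cfc_comp Real.sqrt (fun t => t * t) X hX.isSelfAdjoint]
        rfl
      _ = cfc (fun t => |t|) X := by
        congr 1; funext t; exact Real.sqrt_mul_self_eq_abs t
      _ = specF hX (fun t => |t|) := key hX _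
  rw [traceNorm, this, trace_specF]
  push_cast
  simp


private lemma maxsub (t : ℝ) : max t 0 - max (-t) 0 = t := by
  rcases le_total 0 t with h|h
  · rw [max_eq_left h, max_eq_right (neg_nonpos.mpr h), sub_zero]
  · rw [max_eq_right h, max_eq_left (neg_nonneg.mpr h)]; ring

private lemma maxsum (t : ℝ) : |t| = max t 0 + max (-t) 0 := by
  rcases le_total 0 t with h|h
  · rw [abs_of_nonneg h, max_eq_left h, max_eq_right (neg_nonpos.mpr h), add_zero]
  · rw [abs_of_nonpos h, max_eq_right h, max_eq_left (neg_nonneg.mpr h), zero_add]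

lemma trace_re_nonneg {M : Matrix n n ℂ} (hM : M.PosSemidef) : 0 ≤ M.trace.re := by
  rw [trace_eq_sum_eigenvalues hM.1]
  push_cast
  simp only [Complex.re_sum, Complex.ofReal_re]
  exact Finset.sum_nonneg fun i _ => hM.eigenvalues_nonneg i

lemma posSemidef_eq_ct {m : Type*} [Fintype m] {Q : Matrix m m ℂ} (hQ : Q.PosSemidef) :
    ∃ B : Matrix m m ℂ, Q = Bᴴ * B := by
  classical
  refine ⟨specF hQ.1 Real.sqrt, ?_⟩
  rw [(specF_isHermitian hQ.1 _).eq, specF_mul]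
  conv_lhs => rw [← specF_id hQ.1]
  unfold specF
  congr 2
  congr 1
  funext i
  simp only [id_eq, Real.mul_self_sqrt (hQ.eigenvalues_nonneg i)]

lemma trace_mul_re_nonneg {P Q : Matrix n n ℂ} (hP : P.PosSemidef) (hQ : Q.PosSemidef) :
    0 ≤ ((P * Q).trace).re := by
  obtain ⟨B, hB⟩ := posSemidef_eq_ct hQ
  rw [hB, ← Matrix.mul_assoc, trace_mul_cycle]
  exact trace_re_nonneg (hP.mul_mul_conjTranspose_same B)

/-- Key bound: for a Hermitian contraction `A` (meaning `1 ± A` PSD) and Hermitian `X`,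
`Re tr(A X) ≤ ‖X‖₁`. -/
lemma re_trace_mul_le {A X : Matrix n n ℂ} (hX : X.IsHermitian)
    (h1 : (1 - A).PosSemidef) (h2 : (1 + A).PosSemidef) :
    ((A * X).trace).re ≤ traceNorm X := by
  set P := specF hX (fun t => max t 0) with hPdef
  set N := specF hX (fun t => max (-t) 0) with hNdef
  have hP : P.PosSemidef := specF_posSemidef hX fun i => le_max_right _ _
  have hN : N.PosSemidef := specF_posSemidef hX fun i => le_max_right _ _
  have hXPN : X = P - N := by
    rw [hPdef, hNdef, specF_sub hX]
    conv_lhs => rw [← specF_id hX]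
    exact congrArg (specF hX) (funext fun t => (maxsub t).symm)
  have h1' : ((( 1 - A) * P).trace).re ≥ 0 := trace_mul_re_nonneg h1 hP
  have h2' : (((1 + A) * N).trace).re ≥ 0 := trace_mul_re_nonneg h2 hN
  have hPt : P.trace = ∑ i, ((max (hX.eigenvalues i) 0 : ℝ) : ℂ) := trace_specF hX _
  have hNt : N.trace = ∑ i, ((max (-hX.eigenvalues i) 0 : ℝ) : ℂ) := trace_specF hX _
  have hTN : traceNorm X = P.trace.re + N.trace.re := by
    rw [traceNorm_eq_sum_abs hX, hPt, hNt]
    push_cast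
    simp only [Complex.re_sum, Complex.ofReal_re]
    rw [← Finset.sum_add_distrib]
    exact Finset.sum_congr rfl fun i _ => maxsum _
  have hexp : (A * X).trace = (A * P).trace - (A * N).trace := by
    rw [hXPN, Matrix.mul_sub, trace_sub]
  rw [hexp, Complex.sub_re, hTN]
  have e1 : ((A * P).trace).re ≤ P.trace.re := by
    have : ((1 - A) * P).trace = P.trace - (A * P).trace := by
      rw [Matrix.sub_mul, trace_sub, Matrix.one_mul]
    rw [this, Complex.sub_re] at h1'
    linarith
  have e2 : -(((A * N).trace).re) ≤ N.trace.re := by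
    have : ((1 + A) * N).trace = N.trace + (A * N).trace := by
      rw [Matrix.add_mul, trace_add, Matrix.one_mul]
    rw [this, Complex.add_re] at h2'
    linarith
  linarith

/-- Refined bound for `0 ≤ A ≤ 1`: `Re tr(A X) ≤ (‖X‖₁ + Re tr X)/2`. -/
lemma re_trace_mul_le_half {A X : Matrix n n ℂ} (hX : X.IsHermitian)
    (h0 : A.PosSemidef) (h1 : (1 - A).PosSemidef) :
    ((A * X).trace).re ≤ (traceNorm X + (X.trace).re) / 2 := by
  set P := specF hX (fun t => max t 0) with hPdef
  set N := specF hX (fun t => max (-t) 0) with hNdef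
  have hP : P.PosSemidef := specF_posSemidef hX fun i => le_max_right _ _
  have hN : N.PosSemidef := specF_posSemidef hX fun i => le_max_right _ _
  have hXPN : X = P - N := by
    rw [hPdef, hNdef, specF_sub hX]
    conv_lhs => rw [← specF_id hX]
    exact congrArg (specF hX) (funext fun t => (maxsub t).symm)
  have hPt : P.trace = ∑ i, ((max (hX.eigenvalues i) 0 : ℝ) : ℂ) := trace_specF hX _
  have hPthalf : P.trace.re = (traceNorm X + (X.trace).re) / 2 := by
    rw [traceNorm_eq_sum_abs hX, trace_eq_sum_eigenvalues hX, hPt]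
    push_cast
    simp only [Complex.re_sum, Complex.ofReal_re]
    rw [← Finset.sum_add_distrib, Finset.sum_div]
    refine Finset.sum_congr rfl fun i _ => ?_
    have := maxsum (hX.eigenvalues i)
    have := maxsub (hX.eigenvalues i)
    linarith
  have hexp : (A * X).trace = (A * P).trace - (A * N).trace := by
    rw [hXPN, Matrix.mul_sub, trace_sub]
  have e1 : ((A * P).trace).re ≤ P.trace.re := by
    have h1' := trace_mul_re_nonneg h1 hP
    have : ((1 - A) * P).trace = P.trace - (A * P).trace := by
      rw [Matrix.sub_mul, trace_sub, Matrix.one_mul]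
    rw [this, Complex.sub_re] at h1'
    linarith
  have e2 : 0 ≤ ((A * N).trace).re := trace_mul_re_nonneg h0 hN
  rw [hexp, Complex.sub_re]
  linarith


lemma kron_conjTranspose {l m p q : Type*} (A : Matrix l m ℂ) (B : Matrix p q ℂ) :
    (A ⊗ₖ B)ᴴ = Aᴴ ⊗ₖ Bᴴ := by
  ext ⟨i, j⟩ ⟨k, l⟩
  simp [conjTranspose_apply, mul_comm]

lemma PosSemidef.kron {m p : Type*} [Fintype m] [Fintype p] {A : Matrix m m ℂ}
    {B : Matrix p p ℂ} (hA : A.PosSemidef) (hB : B.PosSemidef) : (A ⊗ₖ B).PosSemidef := by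
  obtain ⟨C, hC⟩ := posSemidef_eq_ct hA
  obtain ⟨E, hE⟩ := posSemidef_eq_ct hB
  rw [hC, hE, mul_kronecker_mul, ← kron_conjTranspose]
  exact Matrix.posSemidef_conjTranspose_mul_self _

lemma dot_vecState (w x : n → ℂ) :
    dotProduct (star x) (vecState w *ᵥ x) =
      ((Complex.normSq (∑ j, (starRingEnd ℂ) (w j) * x j) : ℝ) : ℂ) := by
  have : dotProduct (star x) (vecState w *ᵥ x)
      = (∑ i, (starRingEnd ℂ) (x i) * w i) * (∑ j, (starRingEnd ℂ) (w j) * x j) := by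
    rw [Finset.sum_mul_sum]
    simp only [dotProduct, mulVec, vecState, of_apply, Pi.star_apply, RCLike.star_def,
      dotProduct, Finset.mul_sum]
    refine Finset.sum_congr rfl fun i _ => Finset.sum_congr rfl fun j _ => by ring
  rw [this, show (∑ i, (starRingEnd ℂ) (x i) * w i)
      = (starRingEnd ℂ) (∑ j, (starRingEnd ℂ) (w j) * x j) by
    rw [map_sum]; exact Finset.sum_congr rfl fun j _ => by simp [mul_comm],
    ← Complex.normSq_eq_conj_mul_self]

lemma vecState_isHermitian (w : n → ℂ) : (vecState w).IsHermitian := by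
  ext i j
  simp [vecState, conjTranspose_apply, mul_comm]

lemma vecState_posSemidef (w : n → ℂ) : (vecState w).PosSemidef := by
  refine Matrix.PosSemidef.of_dotProduct_mulVec_nonneg (vecState_isHermitian w) fun x => ?_
  rw [dot_vecState]
  exact Complex.zero_le_real.mpr (Complex.normSq_nonneg _)

lemma vecState_trace {w : n → ℂ} (hw : ∑ i, Complex.normSq (w i) = 1) :
    (vecState w).trace = 1 := by
  rw [trace]
  have h : ∀ i, (vecState w).diag i = ((Complex.normSq (w i) : ℝ) : ℂ) := fun i => by
    simp [vecState, diag, Complex.mul_conj]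
  rw [Finset.sum_congr rfl fun i _ => h i, ← Complex.ofReal_sum, hw, Complex.ofReal_one]

lemma one_sub_vecState_posSemidef {v : n → ℂ} (hv : ∑ i, Complex.normSq (v i) = 1) :
    (1 - vecState v).PosSemidef := by
  refine Matrix.PosSemidef.of_dotProduct_mulVec_nonneg ?_ fun x => ?_
  · exact (isHermitian_one).sub (vecState_isHermitian v)
  · rw [Matrix.sub_mulVec, dotProduct_sub, dot_vecState, Matrix.one_mulVec]
    have hxx : dotProduct (star x) x = ((∑ i, Complex.normSq (x i) : ℝ) : ℂ) := by
      push_cast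
      simp [dotProduct, Complex.normSq_eq_conj_mul_self]
    rw [hxx, ← Complex.ofReal_sub]
    refine Complex.zero_le_real.mpr (sub_nonneg.mpr ?_)
    -- Cauchy–Schwarz via EuclideanSpace
    set v' : EuclideanSpace ℂ n := (WithLp.equiv 2 _).symm v
    set x' : EuclideanSpace ℂ n := (WithLp.equiv 2 _).symm x
    have hinner : (inner ℂ v' x' : ℂ) = ∑ j, (starRingEnd ℂ) (v j) * x j := by
      rw [PiLp.inner_apply]
      exact Finset.sum_congr rfl fun j _ => by simp [v', x', mul_comm]
    have hCS := norm_inner_le_norm (𝕜 := ℂ) v' x'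
    have hnv : ‖v'‖ ^ 2 = 1 := by
      rw [EuclideanSpace.norm_eq, Real.sq_sqrt (Finset.sum_nonneg fun i _ => sq_nonneg _), ← hv]
      exact Finset.sum_congr rfl fun i _ => by
        rw [Complex.sq_norm]; rfl
    have hnx : ‖x'‖ ^ 2 = ∑ i, Complex.normSq (x i) := by
      rw [EuclideanSpace.norm_eq, Real.sq_sqrt (Finset.sum_nonneg fun i _ => sq_nonneg _)]
      exact Finset.sum_congr rfl fun i _ => by
        rw [Complex.sq_norm]; rfl
    have : ‖(inner ℂ v' x' : ℂ)‖ ^ 2 ≤ (‖v'‖ * ‖x'‖) ^ 2 := by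
      have h0 : (0:ℝ) ≤ ‖(inner ℂ v' x' : ℂ)‖ := norm_nonneg _
      nlinarith [hCS]
    rw [hinner] at this
    rw [mul_pow, hnv, hnx, one_mul] at this
    calc Complex.normSq (∑ j, (starRingEnd ℂ) (v j) * x j)
        = ‖(∑ j, (starRingEnd ℂ) (v j) * x j : ℂ)‖ ^ 2 := by
          rw [Complex.sq_norm]
      _ ≤ ∑ i, Complex.normSq (x i) := this


section Ptr
variable {a b c : Type*} [Fintype a] [Fintype b] [Fintype c]
  [DecidableEq a] [DecidableEq b] [DecidableEq c]

def ptrMid (M : Matrix (a × (b × c)) (a × (b × c)) ℂ) : Matrix (a × c) (a × c) ℂ :=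
  Matrix.of fun p q => ∑ m, M (p.1, (m, p.2)) (q.1, (m, q.2))

lemma ptrMid_sub (M N : Matrix (a × (b × c)) (a × (b × c)) ℂ) :
    ptrMid (M - N) = ptrMid M - ptrMid N := by
  ext p q
  simp [ptrMid, Finset.sum_sub_distrib]

lemma ptrMid_isHermitian {M : Matrix (a × (b × c)) (a × (b × c)) ℂ} (hM : M.IsHermitian) :
    (ptrMid M).IsHermitian := by
  ext p q
  simp only [ptrMid, conjTranspose_apply, of_apply, star_sum]
  exact Finset.sum_congr rfl fun m _ => hM.apply _ _

def sgn (t : ℝ) : ℝ := if t < 0 then -1 else 1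

lemma sgn_mul_self (t : ℝ) : sgn t * t = |t| := by
  unfold sgn
  rcases lt_or_ge t 0 with h|h
  · rw [if_pos h, abs_of_neg h]; ring
  · rw [if_neg (not_lt.mpr h), abs_of_nonneg h, one_mul]

lemma abs_sgn_le (t : ℝ) : 0 ≤ 1 - sgn t ∧ 0 ≤ 1 + sgn t := by
  unfold sgn; split <;> norm_num

/-- The index shuffle `a × (b × c) ≃ (a × c) × b`. -/
def shuffle : a × (b × c) ≃ (a × c) × b where
  toFun P := ((P.1, P.2.2), P.2.1)
  invFun Q := (Q.1.1, (Q.2, Q.1.2))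
  left_inv := fun ⟨x, y, z⟩ => rfl
  right_inv := fun ⟨⟨x, z⟩, y⟩ => rfl

lemma trace_submatrix_equiv' {u v : Type*} [Fintype u] [Fintype v] (e : u ≃ v)
    (A : Matrix v v ℂ) : (A.submatrix e e).trace = A.trace := by
  rw [Matrix.trace, Matrix.trace]
  exact Equiv.sum_comp e (fun j => A.diag j)

lemma trace_kron_one {u : Type*} [Fintype u] [DecidableEq u] (S : Matrix u u ℂ)
    (T : Matrix (u × b) (u × b) ℂ) :
    ((S ⊗ₖ (1 : Matrix b b ℂ)) * T).trace
      = (S * Matrix.of (fun p q : u => ∑ y, T (p, y) (q, y))).trace := by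
  rw [Matrix.trace, Matrix.trace]
  simp only [Matrix.diag, mul_apply, kroneckerMap_apply, Matrix.one_apply, of_apply,
    mul_ite, mul_one, mul_zero, ite_mul, zero_mul, Fintype.sum_prod_type,
    Finset.sum_ite_eq, Finset.mem_univ, if_true, Finset.mul_sum]
  exact Finset.sum_congr rfl fun p _ => Finset.sum_comm

lemma trace_tilde (W : Matrix (a × c) (a × c) ℂ) (X : Matrix (a × (b × c)) (a × (b × c)) ℂ) :
    (((W ⊗ₖ (1 : Matrix b b ℂ)).submatrix (shuffle) (shuffle)) * X).trace
      = (W * ptrMid X).trace := by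
  have hX : X = ((X.submatrix (shuffle.symm : (a × c) × b → a × (b × c))
      (shuffle.symm : (a × c) × b → a × (b × c))).submatrix (shuffle) (shuffle)) := by
    rw [submatrix_submatrix]
    simp [Equiv.symm_comp_self]
  conv_lhs => rw [hX]
  rw [submatrix_mul_equiv, trace_submatrix_equiv', trace_kron_one]
  congr 1

lemma traceNorm_ptrMid_le {X : Matrix (a × (b × c)) (a × (b × c)) ℂ} (hX : X.IsHermitian) :
    traceNorm (ptrMid X) ≤ traceNorm X := by
  set Y := ptrMid X with hYdef
  have hY : Y.IsHermitian := ptrMid_isHermitian hX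
  set W := specF hY sgn with hWdef
  have hWherm : W.IsHermitian := specF_isHermitian hY sgn
  have hWY : W * Y = specF hY (fun t => sgn t * t) := by
    have h := specF_mul hY sgn id
    rw [specF_id hY] at h
    exact h
  have htr : ((W * Y).trace).re = traceNorm Y := by
    rw [hWY, trace_specF hY, traceNorm_eq_sum_abs hY, Complex.re_sum]
    exact Finset.sum_congr rfl fun i _ => by rw [Complex.ofReal_re, sgn_mul_self]
  set Wt := ((W ⊗ₖ (1 : Matrix b b ℂ)).submatrix (shuffle) (shuffle)) with hWt
  have hone : (1 : Matrix (a × (b × c)) (a × (b × c)) ℂ)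
      = ((1 : Matrix (a × c) (a × c) ℂ) ⊗ₖ (1 : Matrix b b ℂ)).submatrix (shuffle) (shuffle) := by
    rw [one_kronecker_one, submatrix_one_equiv]
  have honePSD : (1 : Matrix b b ℂ).PosSemidef := Matrix.PosSemidef.one
  have hmain : ∀ V : Matrix (a × c) (a × c) ℂ, ((1 + V) ⊗ₖ (1 : Matrix b b ℂ)).PosSemidef →
      ((1 : Matrix (a × (b × c)) (a × (b × c)) ℂ)
        + (V ⊗ₖ (1 : Matrix b b ℂ)).submatrix (shuffle) (shuffle)).PosSemidef := by
    intro V hV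
    have heq : (1 : Matrix (a × (b × c)) (a × (b × c)) ℂ)
        + (V ⊗ₖ (1 : Matrix b b ℂ)).submatrix (shuffle) (shuffle)
        = ((1 + V) ⊗ₖ (1 : Matrix b b ℂ)).submatrix (shuffle) (shuffle) := by
      ext P Q
      obtain ⟨x, y, z⟩ := P; obtain ⟨x', y', z'⟩ := Q
      simp only [Matrix.add_apply, submatrix_apply, kroneckerMap_apply, Matrix.one_apply,
        shuffle, Equiv.coe_fn_mk, add_mul, one_mul, Prod.mk.injEq, mul_ite, mul_one, mul_zero]
      congr 1
      split_ifs <;> simp_all <;> tauto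
    rw [heq]
    exact (posSemidef_submatrix_equiv shuffle).mpr hV
  have hpWplus : ((1 + W) ⊗ₖ (1 : Matrix b b ℂ)).PosSemidef := by
    refine PosSemidef.kron ?_ honePSD
    rw [show (1 : Matrix (a × c) (a × c) ℂ) + W = specF hY (fun t => 1 + sgn t) by
      rw [← specF_one hY, hWdef, specF_add hY]]
    exact specF_posSemidef hY fun i => (abs_sgn_le _).2
  have hpWminus : ((1 + (-W)) ⊗ₖ (1 : Matrix b b ℂ)).PosSemidef := by
    refine PosSemidef.kron ?_ honePSD
    rw [show (1 : Matrix (a × c) (a × c) ℂ) + -W = specF hY (fun t => 1 - sgn t) by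
      rw [← specF_one hY, hWdef, ← specF_sub hY, sub_eq_add_neg]]
    exact specF_posSemidef hY fun i => (abs_sgn_le _).1
  have h1p : (1 + Wt).PosSemidef := hmain W hpWplus
  have h1m : (1 - Wt).PosSemidef := by
    have := hmain (-W) hpWminus
    have hneg : ((-W) ⊗ₖ (1 : Matrix b b ℂ)).submatrix (shuffle) (shuffle)
        = -((W ⊗ₖ (1 : Matrix b b ℂ)).submatrix (shuffle) (shuffle)) := by
      ext P Q
      simp [submatrix_apply, kroneckerMap_apply]
    rw [hneg] at this
    rw [hWt, sub_eq_add_neg]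
    exact this
  have hkey := re_trace_mul_le hX h1m h1p
  rw [hWt] at *
  rw [← htr, ← trace_tilde W X]
  exact hkey

end Ptr

section Sep
variable {α β : Type*} [Fintype α] [Fintype β] [DecidableEq α] [DecidableEq β]

lemma isPure_isHermitian {φ : Matrix α α ℂ} (h : IsPure φ) : φ.IsHermitian := by
  obtain ⟨v, -, rfl⟩ := h
  exact vecState_isHermitian v

lemma sep_isHermitian {σ : Matrix (α × β) (α × β) ℂ} (hσ : σ ∈ SepSet α β) :
    σ.IsHermitian := by
  have hsub : {σ : Matrix (α × β) (α × β) ℂ | ∃ φ ψ, IsPure φ ∧ IsPure ψ ∧ σ = φ ⊗ₖ ψ}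
      ⊆ {M : Matrix (α × β) (α × β) ℂ | M.IsHermitian} := by
    rintro M ⟨φ, ψ, hφ, hψ, rfl⟩
    show (φ ⊗ₖ ψ).IsHermitian
    rw [IsHermitian, kron_conjTranspose, (isPure_isHermitian hφ).eq, (isPure_isHermitian hψ).eq]
  have hcvx : Convex ℝ {M : Matrix (α × β) (α × β) ℂ | M.IsHermitian} := by
    rintro x hx y hy u v - - -
    show (u • x + v • y).IsHermitian
    ext i j
    simp only [conjTranspose_apply, Matrix.add_apply, Matrix.smul_apply, star_add, star_smul,
      star_trivial]
    rw [hx.apply, hy.apply]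
  exact convexHull_min hsub hcvx hσ

lemma ptrA_isHermitian {M : Matrix (α × β) (α × β) ℂ} (hM : M.IsHermitian) :
    (ptrA M).IsHermitian := by
  ext i j
  simp only [ptrA, conjTranspose_apply, of_apply, star_sum]
  exact Finset.sum_congr rfl fun m _ => hM.apply _ _

lemma ptrA_posSemidef {M : Matrix (α × β) (α × β) ℂ} (hM : M.PosSemidef) :
    (ptrA M).PosSemidef := by
  refine Matrix.PosSemidef.of_dotProduct_mulVec_nonneg (ptrA_isHermitian hM.1) fun x => ?_
  have hL : dotProduct (star x) (ptrA M *ᵥ x)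
      = ∑ m : α, ∑ i : β, ∑ j : β, star (x i) * (M (m, i) (m, j) * x j) := by
    simp only [dotProduct, mulVec, ptrA, of_apply, Pi.star_apply, dotProduct,
      Finset.sum_mul, Finset.mul_sum]
    rw [show (∑ i : β, ∑ j : β, ∑ m : α, star (x i) * (M (m, i) (m, j) * x j))
        = ∑ i : β, ∑ m : α, ∑ j : β, star (x i) * (M (m, i) (m, j) * x j) from
      Finset.sum_congr rfl fun i _ => Finset.sum_comm, Finset.sum_comm]
  have hR : ∀ m : α, dotProduct (star fun p : α × β => if p.1 = m then x p.2 else 0)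
      (M *ᵥ fun p : α × β => if p.1 = m then x p.2 else 0)
      = ∑ i : β, ∑ j : β, star (x i) * (M (m, i) (m, j) * x j) := by
    intro m
    simp only [dotProduct, mulVec, Pi.star_apply, Fintype.sum_prod_type,
      apply_ite (star : ℂ → ℂ), star_zero, ite_mul, zero_mul, mul_ite, mul_zero,
      Finset.sum_ite_eq', Finset.mem_univ, if_true, Finset.mul_sum]
    rw [Finset.sum_eq_single m (fun b _ hb => by simp [hb]) (by simp)]
    simp only [eq_self_iff_true, if_true]
    refine Finset.sum_congr rfl fun i _ => ?_
    rw [Finset.sum_eq_single m (fun b _ hb => by simp [hb]) (by simp)]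
    simp
  rw [hL, ← Finset.sum_congr rfl fun m (_ : m ∈ Finset.univ) => hR m]
  exact Finset.sum_nonneg fun m _ => hM.dotProduct_mulVec_nonneg _

lemma ptrA_trace (M : Matrix (α × β) (α × β) ℂ) : (ptrA M).trace = M.trace := by
  rw [Matrix.trace, Matrix.trace]
  simp only [Matrix.diag, ptrA, of_apply, Fintype.sum_prod_type]
  exact Finset.sum_comm

lemma ptrA_vecState_density {w : α × β → ℂ} (hw : ∑ p, Complex.normSq (w p) = 1) :
    IsDensity (ptrA (vecState w)) := by
  refine ⟨ptrA_posSemidef (vecState_posSemidef w), ?_⟩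
  rw [ptrA_trace, vecState_trace hw]

/-- A pure state tensor a density matrix is separable. -/
lemma kron_density_mem_sepSet {φ : Matrix α α ℂ} (hφ : IsPure φ)
    {R : Matrix β β ℂ} (hR : IsDensity R) : φ ⊗ₖ R ∈ SepSet α β := by
  classical
  have hH : R.IsHermitian := hR.1.1
  set E := hH.eigenvalues with hE
  set U := (hH.eigenvectorUnitary : Matrix β β ℂ) with hU
  set u : β → β → ℂ := fun k i => U i k with hu
  have hEnn : ∀ k, 0 ≤ E k := hR.1.eigenvalues_nonneg
  have hEsumC : ∑ k, (E k : ℂ) = 1 := by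
    rw [← trace_eq_sum_eigenvalues hH, hR.2]
  have hEsum : ∑ k, E k = 1 := by
    have := hEsumC
    rw [← Complex.ofReal_sum] at this
    exact_mod_cast this
  have hent : ∀ j j', R j j' = ∑ k, (E k : ℂ) * (u k j * (starRingEnd ℂ) (u k j')) := by
    intro j j'
    conv_lhs => rw [← specF_id hH]
    simp only [specF, mul_apply, conjTranspose_apply, RCLike.star_def,
      Matrix.diagonal_apply, mul_ite, mul_zero, ite_mul, zero_mul,
      Finset.sum_ite_eq', Finset.mem_univ, if_true, id_eq]
    refine Finset.sum_congr rfl fun k _ => ?_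
    simp only [hu, hU, hE]
    ring
  have hunit : ∀ k, ∑ i, Complex.normSq (u k i) = 1 := by
    intro k
    have h1 := unitary_mul hH
    have h2 : ((hH.eigenvectorUnitary : Matrix β β ℂ)ᴴ
        * (hH.eigenvectorUnitary : Matrix β β ℂ)) k k = (1 : Matrix β β ℂ) k k := by rw [h1]
    rw [mul_apply, Matrix.one_apply_eq] at h2
    have h3 : ∑ i, ((Complex.normSq (u k i) : ℝ) : ℂ) = 1 := by
      rw [← h2]
      refine Finset.sum_congr rfl fun i _ => ?_
      rw [conjTranspose_apply, RCLike.star_def, ← Complex.normSq_eq_conj_mul_self]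
    rw [← Complex.ofReal_sum] at h3
    exact_mod_cast h3
  have hdecomp : φ ⊗ₖ R = ∑ k, E k • (φ ⊗ₖ vecState (u k)) := by
    ext ⟨i, j⟩ ⟨i', j'⟩
    rw [Matrix.sum_apply]
    simp only [kroneckerMap_apply, Matrix.smul_apply, vecState, of_apply]
    rw [hent j j', Finset.mul_sum]
    refine Finset.sum_congr rfl fun k _ => ?_
    rw [Complex.real_smul]
    ring
  rw [hdecomp]
  have hcm : ∑ k : β, E k • (φ ⊗ₖ vecState (u k))
      = Finset.univ.centerMass E (fun k => φ ⊗ₖ vecState (u k)) := by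
    rw [Finset.centerMass, hEsum, inv_one, one_smul]
  rw [hcm]
  refine Finset.centerMass_mem_convexHull _ (fun k _ => hEnn k) (by rw [hEsum]; norm_num) ?_
  intro k _
  exact ⟨φ, vecState (u k), hφ, ⟨u k, hunit k, rfl⟩, rfl⟩

lemma ptrMid_kron {a b c : Type*} [Fintype a] [Fintype b] [Fintype c]
    [DecidableEq a] [DecidableEq b] [DecidableEq c]
    (φ : Matrix a a ℂ) (ψ : Matrix (b × c) (b × c) ℂ) :
    ptrMid (φ ⊗ₖ ψ) = φ ⊗ₖ ptrA ψ := by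
  ext ⟨p1, p2⟩ ⟨q1, q2⟩
  simp [ptrMid, ptrA, kroneckerMap_apply, Finset.mul_sum]

lemma ptrMid_convex_comb {a b c : Type*} [Fintype a] [Fintype b] [Fintype c]
    (u v : ℝ) (x y : Matrix (a × (b × c)) (a × (b × c)) ℂ) :
    ptrMid (u • x + v • y) = u • ptrMid x + v • ptrMid y := by
  ext p q
  simp [ptrMid, Finset.sum_add_distrib, Finset.smul_sum]

lemma sep_ptrMid {a b c : Type*} [Fintype a] [Fintype b] [Fintype c]
    [DecidableEq a] [DecidableEq b] [DecidableEq c]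
    {σ : Matrix (a × (b × c)) (a × (b × c)) ℂ} (hσ : σ ∈ SepSet a (b × c)) :
    ptrMid σ ∈ SepSet a c := by
  have hsub : {σ : Matrix (a × (b × c)) (a × (b × c)) ℂ | ∃ φ ψ, IsPure φ ∧ IsPure ψ ∧ σ = φ ⊗ₖ ψ}
      ⊆ {M : Matrix (a × (b × c)) (a × (b × c)) ℂ | ptrMid M ∈ SepSet a c} := by
    rintro M ⟨φ, ψ, hφ, hψ, rfl⟩
    show ptrMid (φ ⊗ₖ ψ) ∈ SepSet a c
    obtain ⟨w, hw, rfl⟩ := hψ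
    rw [ptrMid_kron]
    exact kron_density_mem_sepSet hφ (ptrA_vecState_density hw)
  have hcvx : Convex ℝ {M : Matrix (a × (b × c)) (a × (b × c)) ℂ | ptrMid M ∈ SepSet a c} := by
    intro x hx y hy u v hu hv huv
    show ptrMid (u • x + v • y) ∈ SepSet a c
    rw [ptrMid_convex_comb]
    exact (convex_convexHull ℝ _) hx hy hu hv huv
  exact convexHull_min hsub hcvx hσ

lemma traceNorm_neg {n : Type*} [Fintype n] [DecidableEq n] (M : Matrix n n ℂ) :
    traceNorm (-M) = traceNorm M := by
  unfold traceNorm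
  rw [conjTranspose_neg, neg_mul_neg]

lemma vecState_mul_self {n : Type*} [Fintype n] [DecidableEq n] {v : n → ℂ}
    (hv : ∑ i, Complex.normSq (v i) = 1) : vecState v * vecState v = vecState v := by
  ext i j
  simp only [mul_apply, vecState, of_apply]
  have h : ∀ k, (v i * (starRingEnd ℂ) (v k)) * (v k * (starRingEnd ℂ) (v j))
      = (v i * (starRingEnd ℂ) (v j)) * ((Complex.normSq (v k) : ℝ) : ℂ) := by
    intro k
    rw [Complex.normSq_eq_conj_mul_self]
    ring
  rw [Finset.sum_congr rfl fun k _ => h k, ← Finset.mul_sum, ← Complex.ofReal_sum, hv]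
  simp

lemma one_sub_kron_one {a b : Type*} [Fintype a] [Fintype b] [DecidableEq a] [DecidableEq b]
    (ψ : Matrix a a ℂ) :
    (1 : Matrix (a × b) (a × b) ℂ) - ψ ⊗ₖ (1 : Matrix b b ℂ)
      = (1 - ψ) ⊗ₖ (1 : Matrix b b ℂ) := by
  ext ⟨i, j⟩ ⟨i', j'⟩
  simp only [Matrix.sub_apply, kroneckerMap_apply, Matrix.one_apply, sub_mul, one_mul,
    Prod.mk.injEq, mul_ite, mul_one, mul_zero]
  congr 1
  split_ifs <;> simp_all

lemma cptp_psd {Γ : Matrix α α ℂ →ₗ[ℂ] Matrix β β ℂ} (hΓ : IsCPTP Γ) {ρ : Matrix α α ℂ}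
    (hρ : ρ.PosSemidef) : (Γ ρ).PosSemidef := by
  have hM : (Matrix.of fun (p q : α × Fin 1) => ρ p.1 q.1).PosSemidef := by
    have heq : (Matrix.of fun (p q : α × Fin 1) => ρ p.1 q.1)
        = ρ ⊗ₖ (1 : Matrix (Fin 1) (Fin 1) ℂ) := by
      ext ⟨i, a⟩ ⟨j, b⟩
      simp [Matrix.one_apply, Subsingleton.elim a b]
    rw [heq]
    exact PosSemidef.kron hρ Matrix.PosSemidef.one
  have hext := hΓ.1 1 _ hM
  have heq2 : Γ ρ = (lmapExt Γ 1 (Matrix.of fun (p q : α × Fin 1) => ρ p.1 q.1)).submatrix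
      ((Equiv.prodUnique β (Fin 1)).symm) ((Equiv.prodUnique β (Fin 1)).symm) := by
    ext i j
    rfl
  rw [heq2]
  exact (posSemidef_submatrix_equiv (Equiv.prodUnique β (Fin 1)).symm).mpr hext

end Sep
end SD

end

noncomputable section

/-- (ε,δ)-strong disentangler. -/
def IsStrongDisentangler (D d : ℕ) (ε δ : ℝ)
    (Λ : Matrix (Fin D) (Fin D) ℂ →ₗ[ℂ] Matrix (Fin d × Fin d) (Fin d × Fin d) ℂ) : Prop :=
  IsCPTP Λ ∧
  (∀ (k : ℕ) (ρ : Matrix (Fin D × Fin k) (Fin D × Fin k) ℂ), IsDensity ρ →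
    ∃ σ ∈ SepSet (Fin d) (Fin d × Fin k),
      traceDist ((Matrix.reindex (Equiv.prodAssoc (Fin d) (Fin d) (Fin k))
        (Equiv.prodAssoc (Fin d) (Fin d) (Fin k))) (lmapExt Λ k ρ)) σ ≤ ε) ∧
  (∀ σ ∈ SepSet (Fin d) (Fin d), ∃ ρ, IsDensity ρ ∧ traceDist (Λ ρ) σ ≤ δ)

theorem strong_disentangler_induced_channel {D d : ℕ} {ε δ : ℝ}
    (Λ : Matrix (Fin D) (Fin D) ℂ →ₗ[ℂ] Matrix (Fin d × Fin d) (Fin d × Fin d) ℂ)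
    (hΛ : IsStrongDisentangler D d ε δ Λ) :
    (∀ (k : ℕ) (ρ : Matrix (Fin D × Fin k) (Fin D × Fin k) ℂ), IsDensity ρ →
      ∃ σ ∈ SepSet (Fin d) (Fin k),
        traceDist (Matrix.of fun (p q : Fin d × Fin k) =>
          ∑ m, (lmapExt Λ k ρ) ((p.1, m), p.2) ((q.1, m), q.2)) σ ≤ ε) ∧
      ∀ ψ : Matrix (Fin d) (Fin d) ℂ, IsPure ψ →
        ∃ ρ, IsDensity ρ ∧ 1 - δ ≤ ((ψ * ptrB (Λ ρ)).trace).re := by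
  constructor
  · intro k ρ hρ
    obtain ⟨σ, hσ, hdist⟩ := hΛ.2.1 k ρ hρ
    set pa := Equiv.prodAssoc (Fin d) (Fin d) (Fin k) with hpa
    set M := (Matrix.reindex pa pa) (lmapExt Λ k ρ) with hM
    have hMPSD : M.PosSemidef := by
      have h := hΛ.1.1 k ρ hρ.1
      rw [hM, Matrix.reindex_apply]
      exact (posSemidef_submatrix_equiv pa.symm).mpr h
    refine ⟨SD.ptrMid σ, SD.sep_ptrMid hσ, ?_⟩
    have hY : (Matrix.of fun (p q : Fin d × Fin k) =>
        ∑ m, (lmapExt Λ k ρ) ((p.1, m), p.2) ((q.1, m), q.2)) = SD.ptrMid M := by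
      ext p q
      rfl
    rw [hY]
    have hherm : (M - σ).IsHermitian := hMPSD.1.sub (SD.sep_isHermitian hσ)
    have hmono := SD.traceNorm_ptrMid_le hherm
    rw [SD.ptrMid_sub] at hmono
    have : traceDist (SD.ptrMid M) (SD.ptrMid σ) ≤ traceDist M σ := by
      rw [traceDist, traceDist]
      linarith
    exact this.trans hdist
  · intro ψ hψ
    have hsep : ψ ⊗ₖ ψ ∈ SepSet (Fin d) (Fin d) :=
      subset_convexHull ℝ _ ⟨ψ, ψ, hψ, hψ, rfl⟩
    obtain ⟨ρ, hρ, hdist⟩ := hΛ.2.2 _ hsep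
    refine ⟨ρ, hρ, ?_⟩
    obtain ⟨v, hv, hψv⟩ := hψ
    set A := ψ ⊗ₖ (1 : Matrix (Fin d) (Fin d) ℂ) with hA
    have hptr : (A * (Λ ρ)).trace = (ψ * ptrB (Λ ρ)).trace := by
      rw [hA, SD.trace_kron_one]
      rfl
    set X := ψ ⊗ₖ ψ - Λ ρ with hX
    have hΛρPSD : (Λ ρ).PosSemidef := SD.cptp_psd hΛ.1 hρ.1
    have hψher : ψ.IsHermitian := SD.isPure_isHermitian ⟨v, hv, hψv⟩
    have hkherm : (ψ ⊗ₖ ψ).IsHermitian := by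
      rw [IsHermitian, SD.kron_conjTranspose, hψher.eq]
    have hherm : X.IsHermitian := hkherm.sub hΛρPSD.1
    have hψtr : ψ.trace = 1 := by rw [hψv]; exact SD.vecState_trace hv
    have htrσ : (ψ ⊗ₖ ψ).trace = 1 := by rw [trace_kronecker, hψtr, mul_one]
    have htrX : X.trace = 0 := by
      rw [hX, trace_sub, htrσ, hΛ.1.2, hρ.2, sub_self]
    have hA0 : A.PosSemidef := by
      rw [hA, hψv]
      exact SD.PosSemidef.kron (SD.vecState_posSemidef v) Matrix.PosSemidef.one
    have hA1 : ((1 : Matrix (Fin d × Fin d) (Fin d × Fin d) ℂ) - A).PosSemidef := by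
      rw [hA, SD.one_sub_kron_one]
      refine SD.PosSemidef.kron ?_ Matrix.PosSemidef.one
      rw [hψv]
      exact SD.one_sub_vecState_posSemidef hv
    have hbound := SD.re_trace_mul_le_half hherm hA0 hA1
    rw [htrX] at hbound
    have hXnorm : traceNorm X ≤ 2 * δ := by
      have hXeq : X = -(Λ ρ - ψ ⊗ₖ ψ) := by rw [hX, neg_sub]
      rw [hXeq, SD.traceNorm_neg]
      rw [traceDist] at hdist
      linarith
    have htrAσ : ((A * (ψ ⊗ₖ ψ)).trace) = 1 := by
      rw [hA, ← mul_kronecker_mul, trace_kronecker, hψv, SD.vecState_mul_self hv,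
        Matrix.one_mul, ← hψv, hψtr, mul_one]
    have hsplit : (A * (Λ ρ)).trace = (A * (ψ ⊗ₖ ψ)).trace - (A * X).trace := by
      rw [hX, Matrix.mul_sub, trace_sub]
      ring
    have hfin : ((ψ * ptrB (Λ ρ)).trace).re = 1 - ((A * X).trace).re := by
      rw [← hptr, hsplit, Complex.sub_re, htrAσ, Complex.one_re]
    rw [hfin]
    simp only [Complex.zero_re, add_zero] at hbound
    linarith

end
end
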